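/- Let W be an n×n real symmetric positive definite matrix and S an n×r real matrix with full column rank. For every r×n real matrix G satisfying SGS = S, we have tr(S(SᵀW⁻¹S)⁻¹Sᵀ) ≤ tr(SGWGᵀSᵀ); that is, G* = (SᵀW⁻¹S)⁻¹SᵀW⁻¹ solves the minimum trace problem min_G tr(SGWGᵀSᵀ) subject to SGS = S. -/

import Mathlib

open Matrix

private lemma psd_trace_nonneg {m : ℕ} (A : Matrix (Fin m) (Fin m) ℝ)
    (hA : A.PosSemidef) : 0 ≤ A.trace := by
  rw [Matrix.trace]
  apply Finset.sum_nonneg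
  intro i _
  have h := hA.dotProduct_mulVec_nonneg (Pi.single i 1)
  simpa [Matrix.mulVec_single, Matrix.diag] using h

/-- For every mapping matrix G with SGS = S, we have
tr(S(SᵀW⁻¹S)⁻¹Sᵀ) ≤ tr(SGWGᵀSᵀ): G* = (SᵀW⁻¹S)⁻¹SᵀW⁻¹ solves the minimum trace
problem. -/
theorem minT_trace_optimal {n r : ℕ}
    (W : Matrix (Fin n) (Fin n) ℝ) (S : Matrix (Fin n) (Fin r) ℝ)
    (hW : W.PosDef) (hS : S.rank = r) :
    ∀ G : Matrix (Fin r) (Fin n) ℝ, S * G * S = S →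
      (S * (Sᵀ * W⁻¹ * S)⁻¹ * Sᵀ).trace ≤ (S * G * W * Gᵀ * Sᵀ).trace := by
  intro G hG
  classical
  -- injectivity of S
  have hinj : Function.Injective S.mulVecLin := by
    rw [← LinearMap.ker_eq_bot]
    have h := LinearMap.finrank_range_add_finrank_ker S.mulVecLin
    rw [Matrix.rank] at hS
    rw [hS] at h
    simp only [Module.finrank_pi, Fintype.card_fin] at h
    have : Module.finrank ℝ (LinearMap.ker S.mulVecLin) = 0 := by omega
    exact Submodule.finrank_eq_zero.mp this
  have hWi := hW.inv
  have hMpd : (Sᵀ * W⁻¹ * S).PosDef := by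
    refine Matrix.PosDef.of_dotProduct_mulVec_pos ?_ ?_
    · have := isHermitian_conjTranspose_mul_mul S hWi.isHermitian
      simpa [Matrix.conjTranspose_eq_transpose_of_trivial] using this
    · intro x hx
      have hSx : S *ᵥ x ≠ 0 := by
        intro h
        apply hx
        have : S.mulVecLin x = S.mulVecLin 0 := by simpa [Matrix.mulVecLin_apply] using h
        exact hinj this
      have := hWi.dotProduct_mulVec_pos hSx
      simpa only [star_trivial, ← Matrix.mulVec_mulVec, Matrix.dotProduct_mulVec,
        Matrix.vecMul_transpose] using this
  set M : Matrix (Fin r) (Fin r) ℝ := Sᵀ * W⁻¹ * S with hMdef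
  -- invertibility facts
  have hWdet : IsUnit W.det := (Matrix.isUnit_iff_isUnit_det W).mp hW.isUnit
  have hMdet : IsUnit M.det := (Matrix.isUnit_iff_isUnit_det M).mp hMpd.isUnit
  have hWW : W * W⁻¹ = 1 := Matrix.mul_nonsing_inv W hWdet
  have hW'W : W⁻¹ * W = 1 := Matrix.nonsing_inv_mul W hWdet
  have hMM : M⁻¹ * M = 1 := Matrix.nonsing_inv_mul M hMdet
  have hMM' : M * M⁻¹ = 1 := Matrix.mul_nonsing_inv M hMdet
  -- symmetry facts
  have hWt : Wᵀ = W := by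
    have := hW.isHermitian.eq
    simpa [Matrix.conjTranspose_eq_transpose_of_trivial] using this
  have hWit : (W⁻¹)ᵀ = W⁻¹ := by rw [Matrix.transpose_nonsing_inv, hWt]
  have hMt : Mᵀ = M := by
    rw [hMdef]
    simp [Matrix.transpose_mul, hWit, Matrix.mul_assoc]
  have hMit : (M⁻¹)ᵀ = M⁻¹ := by rw [Matrix.transpose_nonsing_inv, hMt]
  -- the optimal reconciliation matrix
  set A : Matrix (Fin n) (Fin n) ℝ := S * M⁻¹ * Sᵀ * W⁻¹ with hAdef
  set D : Matrix (Fin n) (Fin n) ℝ := S * G - A with hDdef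
  have hDS : D * S = 0 := by
    rw [hDdef, Matrix.sub_mul, hG, hAdef]
    have : S * M⁻¹ * Sᵀ * W⁻¹ * S = S * M⁻¹ * M := by
      rw [hMdef]; simp only [Matrix.mul_assoc]
    rw [this, Matrix.mul_assoc, hMM, Matrix.mul_one, sub_self]
  have hAt : Aᵀ = W⁻¹ * S * M⁻¹ * Sᵀ := by
    rw [hAdef]
    simp only [Matrix.transpose_mul, hWit, hMit, Matrix.transpose_transpose, Matrix.mul_assoc]
  have hAWA : A * W * Aᵀ = S * M⁻¹ * Sᵀ := by
    rw [hAt, hAdef]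
    calc S * M⁻¹ * Sᵀ * W⁻¹ * W * (W⁻¹ * S * M⁻¹ * Sᵀ)
        = S * M⁻¹ * Sᵀ * (W⁻¹ * W) * (W⁻¹ * S * M⁻¹ * Sᵀ) := by
          simp only [Matrix.mul_assoc]
      _ = S * M⁻¹ * (Sᵀ * W⁻¹ * S) * M⁻¹ * Sᵀ := by
          rw [hW'W, Matrix.mul_one]; simp only [Matrix.mul_assoc]
      _ = S * (M⁻¹ * M) * M⁻¹ * Sᵀ := by
          rw [← hMdef]; simp only [Matrix.mul_assoc]
      _ = S * M⁻¹ * Sᵀ := by rw [hMM, Matrix.mul_one]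
  have hDWA : D * W * Aᵀ = 0 := by
    rw [hAt]
    calc D * W * (W⁻¹ * S * M⁻¹ * Sᵀ)
        = D * (W * W⁻¹) * (S * M⁻¹ * Sᵀ) := by simp only [Matrix.mul_assoc]
      _ = D * S * (M⁻¹ * Sᵀ) := by rw [hWW, Matrix.mul_one]; simp only [Matrix.mul_assoc]
      _ = 0 := by rw [hDS, Matrix.zero_mul]
  have hAWD : A * W * Dᵀ = 0 := by
    have : (A * W * Dᵀ)ᵀ = 0 := by
      rw [Matrix.transpose_mul, Matrix.transpose_mul, Matrix.transpose_transpose, hWt,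
        ← Matrix.mul_assoc]
      exact hDWA
    calc A * W * Dᵀ = ((A * W * Dᵀ)ᵀ)ᵀ := by rw [Matrix.transpose_transpose]
      _ = 0 := by rw [this, Matrix.transpose_zero]
  -- the key decomposition
  have key : S * G * W * Gᵀ * Sᵀ = S * M⁻¹ * Sᵀ + D * W * Dᵀ := by
    have hSG : S * G = A + D := by rw [hDdef]; abel
    calc S * G * W * Gᵀ * Sᵀ
        = (S * G) * W * (S * G)ᵀ := by
          simp only [Matrix.transpose_mul, Matrix.mul_assoc]
      _ = (A + D) * W * (A + D)ᵀ := by rw [hSG]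
      _ = S * M⁻¹ * Sᵀ + D * W * Dᵀ := by
          simp only [Matrix.transpose_add, Matrix.add_mul, Matrix.mul_add, hAWA, hAWD, hDWA]
          abel
  have hDWDpsd : (D * W * Dᵀ).PosSemidef := by
    have := hW.posSemidef.mul_mul_conjTranspose_same D
    simpa [Matrix.conjTranspose_eq_transpose_of_trivial] using this
  have htr : 0 ≤ (D * W * Dᵀ).trace := psd_trace_nonneg _ hDWDpsd
  rw [key, Matrix.trace_add]
  linarith
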